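/- Fix real numbers D > 0 and L ≥ 2D, and let C_T = [0,D]×[0,D] and C_R = [L, L+D]×[0,D] be squares in the Euclidean plane ℝ². Let u, v ∈ C_T with u ≠ v, and suppose the straight line through u and v does not intersect C_R. Then for every point s ∈ C_R, the (unsigned) angle ∠(u, s, v) at vertex s between the rays from s to u and from s to v satisfies ∠(u, s, v) ≥ min{ ∠(u, c, v) : c ∈ {(L,0), (L+D,0), (L+D,D), (L,D)} }, i.e., the angle subtended at s by the segment uv is at least the minimum of the angles subtended at the four corners of C_R. -/

import Mathlib

open EuclideanGeometry

private lemma cos_mono (a1 b1 a2 b2 : ℝ) (h1 : 0 < a1) (h2 : 0 < a2) (h : b1 * a2 ≤ b2 * a1) :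
    b1 / Real.sqrt (a1^2 + b1^2) ≤ b2 / Real.sqrt (a2^2 + b2^2) := by
  have hs1 : 0 < Real.sqrt (a1^2 + b1^2) := Real.sqrt_pos.2 (by positivity)
  have hs2 : 0 < Real.sqrt (a2^2 + b2^2) := Real.sqrt_pos.2 (by positivity)
  have hq1 : Real.sqrt (a1^2 + b1^2) ^ 2 = a1^2 + b1^2 := Real.sq_sqrt (by positivity)
  have hq2 : Real.sqrt (a2^2 + b2^2) ^ 2 = a2^2 + b2^2 := Real.sq_sqrt (by positivity)
  rw [div_le_div_iff₀ hs1 hs2]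
  rcases le_or_gt b1 0 with hb1 | hb1
  · rcases le_or_gt 0 b2 with hb2 | hb2
    · have l1 : b1 * Real.sqrt (a2^2 + b2^2) ≤ 0 := mul_nonpos_of_nonpos_of_nonneg hb1 hs2.le
      have l2 : 0 ≤ b2 * Real.sqrt (a1^2 + b1^2) := mul_nonneg hb2 hs1.le
      linarith
    · -- b2 < 0, hence b1 < 0
      have hb1' : b1 < 0 := by nlinarith
      have e1 : (-b2) * Real.sqrt (a1^2 + b1^2) = Real.sqrt (b2^2 * (a1^2 + b1^2)) := by
        rw [Real.sqrt_mul (sq_nonneg b2), Real.sqrt_sq_eq_abs, abs_of_neg hb2]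
      have e2 : (-b1) * Real.sqrt (a2^2 + b2^2) = Real.sqrt (b1^2 * (a2^2 + b2^2)) := by
        rw [Real.sqrt_mul (sq_nonneg b1), Real.sqrt_sq_eq_abs, abs_of_neg hb1']
      have hineq : b2^2 * (a1^2 + b1^2) ≤ b1^2 * (a2^2 + b2^2) := by
        nlinarith [mul_nonneg (by nlinarith : (0:ℝ) ≤ b2 * a1 - b1 * a2)
          (by nlinarith : (0:ℝ) ≤ - b1 * a2 - b2 * a1)]
      have := Real.sqrt_le_sqrt hineq
      linarith [e1, e2]
  · have hb2 : 0 < b2 := by nlinarith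
    have e1 : b1 * Real.sqrt (a2^2 + b2^2) = Real.sqrt (b1^2 * (a2^2 + b2^2)) := by
      rw [Real.sqrt_mul (sq_nonneg b1), Real.sqrt_sq_eq_abs, abs_of_pos hb1]
    have e2 : b2 * Real.sqrt (a1^2 + b1^2) = Real.sqrt (b2^2 * (a1^2 + b1^2)) := by
      rw [Real.sqrt_mul (sq_nonneg b2), Real.sqrt_sq_eq_abs, abs_of_pos hb2]
    have hineq : b1^2 * (a2^2 + b2^2) ≤ b2^2 * (a1^2 + b1^2) := by
      nlinarith [mul_nonneg (by nlinarith : (0:ℝ) ≤ b2 * a1 - b1 * a2)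
        (by nlinarith : (0:ℝ) ≤ b1 * a2 + b2 * a1)]
    have := Real.sqrt_le_sqrt hineq
    linarith [e1, e2]

private lemma angle_formula (u v s : EuclideanSpace ℝ (Fin 2))
    (hA : (u 0 - s 0) * (v 1 - s 1) - (u 1 - s 1) * (v 0 - s 0) ≠ 0) :
    ∠ u s v = Real.arccos
      (((u 0 - s 0) * (v 0 - s 0) + (u 1 - s 1) * (v 1 - s 1)) /
        Real.sqrt (((u 0 - s 0) * (v 1 - s 1) - (u 1 - s 1) * (v 0 - s 0))^2
          + ((u 0 - s 0) * (v 0 - s 0) + (u 1 - s 1) * (v 1 - s 1))^2)) := by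
  have hx0 : (u - s : EuclideanSpace ℝ (Fin 2)) 0 = u 0 - s 0 := rfl
  have hx1 : (u - s : EuclideanSpace ℝ (Fin 2)) 1 = u 1 - s 1 := rfl
  have hy0 : (v - s : EuclideanSpace ℝ (Fin 2)) 0 = v 0 - s 0 := rfl
  have hy1 : (v - s : EuclideanSpace ℝ (Fin 2)) 1 = v 1 - s 1 := rfl
  have hang : ∠ u s v = InnerProductGeometry.angle (u - s) (v - s) := rfl
  rw [hang]
  rw [show InnerProductGeometry.angle (u - s) (v - s)
      = Real.arccos ((inner ℝ (u - s) (v - s) : ℝ) / (‖u - s‖ * ‖v - s‖)) from rfl]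
  have hinner : (inner ℝ (u - s) (v - s) : ℝ)
      = (u 0 - s 0) * (v 0 - s 0) + (u 1 - s 1) * (v 1 - s 1) := by
    simp [PiLp.inner_apply, Fin.sum_univ_two, RCLike.inner_apply, conj_trivial, hx0, hx1, hy0, hy1]
    ring
  have hnx : ‖(u - s : EuclideanSpace ℝ (Fin 2))‖
      = Real.sqrt ((u 0 - s 0)^2 + (u 1 - s 1)^2) := by
    rw [EuclideanSpace.norm_eq]; simp [Fin.sum_univ_two, sq_abs, hx0, hx1]
  have hny : ‖(v - s : EuclideanSpace ℝ (Fin 2))‖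
      = Real.sqrt ((v 0 - s 0)^2 + (v 1 - s 1)^2) := by
    rw [EuclideanSpace.norm_eq]; simp [Fin.sum_univ_two, sq_abs, hy0, hy1]
  rw [hinner, hnx, hny, ← Real.sqrt_mul (by positivity)]
  congr 2
  ring

private lemma corner_le (u v s c : EuclideanSpace ℝ (Fin 2))
    (hAs : 0 < (u 0 - s 0) * (v 1 - s 1) - (u 1 - s 1) * (v 0 - s 0))
    (hAc : 0 < (u 0 - c 0) * (v 1 - c 1) - (u 1 - c 1) * (v 0 - c 0))
    (h : ((u 0 - s 0) * (v 0 - s 0) + (u 1 - s 1) * (v 1 - s 1)) *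
          ((u 0 - c 0) * (v 1 - c 1) - (u 1 - c 1) * (v 0 - c 0))
        ≤ ((u 0 - c 0) * (v 0 - c 0) + (u 1 - c 1) * (v 1 - c 1)) *
          ((u 0 - s 0) * (v 1 - s 1) - (u 1 - s 1) * (v 0 - s 0))) :
    ∠ u c v ≤ ∠ u s v := by
  set As := (u 0 - s 0) * (v 1 - s 1) - (u 1 - s 1) * (v 0 - s 0) with hAsd
  set Bs := (u 0 - s 0) * (v 0 - s 0) + (u 1 - s 1) * (v 1 - s 1) with hBsd
  set Ac := (u 0 - c 0) * (v 1 - c 1) - (u 1 - c 1) * (v 0 - c 0) with hAcd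
  set Bc := (u 0 - c 0) * (v 0 - c 0) + (u 1 - c 1) * (v 1 - c 1) with hBcd
  rw [angle_formula u v s hAs.ne', angle_formula u v c hAc.ne']
  have hmono := cos_mono As Bs Ac Bc hAs hAc h
  rw [Real.arccos, Real.arccos]
  exact sub_le_sub_left (Real.monotone_arcsin hmono) _

private lemma mem_line (u v p : EuclideanSpace ℝ (Fin 2)) (huv : u ≠ v)
    (h : (u 0 - p 0) * (v 1 - p 1) - (u 1 - p 1) * (v 0 - p 0) = 0) :
    p ∈ affineSpan ℝ ({u, v} : Set (EuclideanSpace ℝ (Fin 2))) := by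
  have h' : (u 0 - p 0) * (v 1 - u 1) - (u 1 - p 1) * (v 0 - u 0) = 0 := by linear_combination h
  have hlm : ∀ (c : ℝ) (i : Fin 2),
      (AffineMap.lineMap u v c : EuclideanSpace ℝ (Fin 2)) i = c * (v i - u i) + u i := by
    intro c i; simp [AffineMap.lineMap_apply]
  rcases eq_or_ne (v 0) (u 0) with h0 | h0
  · have hne : v 1 - u 1 ≠ 0 := by
      intro h1
      apply huv
      ext i
      fin_cases i
      · exact h0.symm
      · simpa using (by linarith : u 1 = v 1)
    have hp0 : p 0 = u 0 := by
      have : (u 0 - p 0) * (v 1 - u 1) = 0 := by rw [h0] at h'; linarith [h']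
      rcases mul_eq_zero.1 this with h2 | h2
      · linarith
      · exact absurd h2 hne
    have : p = AffineMap.lineMap u v (-((u 1 - p 1) / (v 1 - u 1))) := by
      ext i
      rw [hlm]
      fin_cases i
      · show p 0 = -((u 1 - p 1) / (v 1 - u 1)) * (v 0 - u 0) + u 0
        rw [h0, hp0]; ring
      · show p 1 = -((u 1 - p 1) / (v 1 - u 1)) * (v 1 - u 1) + u 1
        field_simp
        ring
    rw [this]; exact AffineMap.lineMap_mem_affineSpan_pair _ _ _
  · have h0' : v 0 - u 0 ≠ 0 := sub_ne_zero.2 h0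
    have : p = AffineMap.lineMap u v (-((u 0 - p 0) / (v 0 - u 0))) := by
      ext i
      rw [hlm]
      fin_cases i
      · show p 0 = -((u 0 - p 0) / (v 0 - u 0)) * (v 0 - u 0) + u 0
        field_simp
        ring
      · show p 1 = -((u 0 - p 0) / (v 0 - u 0)) * (v 1 - u 1) + u 1
        field_simp
        linear_combination h'
    rw [this]; exact AffineMap.lineMap_mem_affineSpan_pair _ _ _

private lemma A_pos (L D : ℝ) (u v : EuclideanSpace ℝ (Fin 2)) (huv : u ≠ v)
    (hline : ∀ p ∈ affineSpan ℝ ({u, v} : Set (EuclideanSpace ℝ (Fin 2))),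
      ¬(p 0 ∈ Set.Icc L (L + D) ∧ p 1 ∈ Set.Icc 0 D))
    (s : EuclideanSpace ℝ (Fin 2))
    (hs0 : L ≤ s 0) (hs0' : s 0 ≤ L + D) (hs1 : 0 ≤ s 1) (hs1' : s 1 ≤ D)
    (hAs : 0 < ((u 0 - s 0) * (v 1 - s 1) - (u 1 - s 1) * (v 0 - s 0)))
    (c : EuclideanSpace ℝ (Fin 2))
    (hc0 : L ≤ c 0) (hc0' : c 0 ≤ L + D) (hc1 : 0 ≤ c 1) (hc1' : c 1 ≤ D) :
    0 < (u 0 - c 0) * (v 1 - c 1) - (u 1 - c 1) * (v 0 - c 0) := by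
  by_contra hcon
  push_neg at hcon
  set t : ℝ := ((u 0 - s 0) * (v 1 - s 1) - (u 1 - s 1) * (v 0 - s 0)) /
      (((u 0 - s 0) * (v 1 - s 1) - (u 1 - s 1) * (v 0 - s 0)) - ((u 0 - c 0) * (v 1 - c 1) - (u 1 - c 1) * (v 0 - c 0))) with ht
  have hd : 0 < ((u 0 - s 0) * (v 1 - s 1) - (u 1 - s 1) * (v 0 - s 0)) - ((u 0 - c 0) * (v 1 - c 1) - (u 1 - c 1) * (v 0 - c 0)) := by linarith
  have ht0 : 0 ≤ t := div_nonneg hAs.le hd.le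
  have ht1 : t ≤ 1 := (div_le_one hd).2 (by linarith)
  have htA : (1 - t) * ((u 0 - s 0) * (v 1 - s 1) - (u 1 - s 1) * (v 0 - s 0)) + t * ((u 0 - c 0) * (v 1 - c 1) - (u 1 - c 1) * (v 0 - c 0)) = 0 := by
    rw [ht]; field_simp; ring
  set w : EuclideanSpace ℝ (Fin 2) :=
    (WithLp.equiv 2 (Fin 2 → ℝ)).symm ![(1 - t) * s 0 + t * c 0, (1 - t) * s 1 + t * c 1] with hwdef
  have hw0 : w 0 = (1 - t) * s 0 + t * c 0 := rfl
  have hw1 : w 1 = (1 - t) * s 1 + t * c 1 := rfl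
  have hAw : (u 0 - w 0) * (v 1 - w 1) - (u 1 - w 1) * (v 0 - w 0) = 0 := by
    rw [hw0, hw1]; linear_combination htA
  refine hline w (mem_line u v w huv hAw) ⟨Set.mem_Icc.2 ⟨?_, ?_⟩, Set.mem_Icc.2 ⟨?_, ?_⟩⟩
  · linarith [hw0, mul_nonneg (by linarith : (0:ℝ) ≤ 1 - t) (by linarith : (0:ℝ) ≤ s 0 - L),
      mul_nonneg ht0 (by linarith : (0:ℝ) ≤ c 0 - L)]
  · linarith [hw0, mul_nonneg (by linarith : (0:ℝ) ≤ 1 - t) (by linarith : (0:ℝ) ≤ L + D - s 0),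
      mul_nonneg ht0 (by linarith : (0:ℝ) ≤ L + D - c 0)]
  · linarith [hw1, mul_nonneg (by linarith : (0:ℝ) ≤ 1 - t) hs1, mul_nonneg ht0 hc1]
  · linarith [hw1, mul_nonneg (by linarith : (0:ℝ) ≤ 1 - t) (by linarith : (0:ℝ) ≤ D - s 1),
      mul_nonneg ht0 (by linarith : (0:ℝ) ≤ D - c 1)]

private lemma key (D L : ℝ) (hD : 0 < D) (u v : EuclideanSpace ℝ (Fin 2)) (huv : u ≠ v)
    (hline : ∀ p ∈ affineSpan ℝ ({u, v} : Set (EuclideanSpace ℝ (Fin 2))),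
      ¬(p 0 ∈ Set.Icc L (L + D) ∧ p 1 ∈ Set.Icc 0 D))
    (s : EuclideanSpace ℝ (Fin 2))
    (hs0 : L ≤ s 0) (hs0' : s 0 ≤ L + D) (hs1 : 0 ≤ s 1) (hs1' : s 1 ≤ D)
    (hAs : 0 < ((u 0 - s 0) * (v 1 - s 1) - (u 1 - s 1) * (v 0 - s 0))) :
    min (min (∠ u ((WithLp.equiv 2 (Fin 2 → ℝ)).symm ![L, 0]) v)
             (∠ u ((WithLp.equiv 2 (Fin 2 → ℝ)).symm ![L + D, 0]) v))
        (min (∠ u ((WithLp.equiv 2 (Fin 2 → ℝ)).symm ![L + D, D]) v)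
             (∠ u ((WithLp.equiv 2 (Fin 2 → ℝ)).symm ![L, D]) v))
      ≤ ∠ u s v := by
  have hA1 : 0 < ((u 0 - L) * (v 1 - 0) - (u 1 - 0) * (v 0 - L)) :=
    A_pos L D u v huv hline s hs0 hs0' hs1 hs1' hAs
      ((WithLp.equiv 2 (Fin 2 → ℝ)).symm ![L, 0]) (by show L ≤ L; linarith)
      (by show L ≤ L + D; linarith) (by show (0:ℝ) ≤ 0; linarith) (by show (0:ℝ) ≤ D; linarith)
  have hA2 : 0 < ((u 0 - (L + D)) * (v 1 - 0) - (u 1 - 0) * (v 0 - (L + D))) :=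
    A_pos L D u v huv hline s hs0 hs0' hs1 hs1' hAs
      ((WithLp.equiv 2 (Fin 2 → ℝ)).symm ![L + D, 0]) (by show L ≤ L + D; linarith)
      (by show L + D ≤ L + D; linarith) (by show (0:ℝ) ≤ 0; linarith) (by show (0:ℝ) ≤ D; linarith)
  have hA3 : 0 < ((u 0 - (L + D)) * (v 1 - D) - (u 1 - D) * (v 0 - (L + D))) :=
    A_pos L D u v huv hline s hs0 hs0' hs1 hs1' hAs
      ((WithLp.equiv 2 (Fin 2 → ℝ)).symm ![L + D, D]) (by show L ≤ L + D; linarith)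
      (by show L + D ≤ L + D; linarith) (by show (0:ℝ) ≤ D; linarith) (by show D ≤ D; linarith)
  have hA4 : 0 < ((u 0 - L) * (v 1 - D) - (u 1 - D) * (v 0 - L)) :=
    A_pos L D u v huv hline s hs0 hs0' hs1 hs1' hAs
      ((WithLp.equiv 2 (Fin 2 → ℝ)).symm ![L, D]) (by show L ≤ L; linarith)
      (by show L ≤ L + D; linarith) (by show (0:ℝ) ≤ D; linarith) (by show D ≤ D; linarith)
  by_contra hcon
  push_neg at hcon
  simp only [lt_min_iff] at hcon
  obtain ⟨⟨hc1, hc2⟩, hc3, hc4⟩ := hcon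
  have hb1 : ((u 0 - L) * (v 0 - L) + (u 1 - 0) * (v 1 - 0)) * ((u 0 - s 0) * (v 1 - s 1) - (u 1 - s 1) * (v 0 - s 0)) < ((u 0 - s 0) * (v 0 - s 0) + (u 1 - s 1) * (v 1 - s 1)) * ((u 0 - L) * (v 1 - 0) - (u 1 - 0) * (v 0 - L)) := by
    by_contra hb
    push_neg at hb
    exact absurd (corner_le u v s ((WithLp.equiv 2 (Fin 2 → ℝ)).symm ![L, 0]) hAs hA1 hb)
      (not_le.2 hc1)
  have hb2 : ((u 0 - (L + D)) * (v 0 - (L + D)) + (u 1 - 0) * (v 1 - 0)) * ((u 0 - s 0) * (v 1 - s 1) - (u 1 - s 1) * (v 0 - s 0)) < ((u 0 - s 0) * (v 0 - s 0) + (u 1 - s 1) * (v 1 - s 1)) * ((u 0 - (L + D)) * (v 1 - 0) - (u 1 - 0) * (v 0 - (L + D))) := by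
    by_contra hb
    push_neg at hb
    exact absurd (corner_le u v s ((WithLp.equiv 2 (Fin 2 → ℝ)).symm ![L + D, 0]) hAs hA2 hb)
      (not_le.2 hc2)
  have hb3 : ((u 0 - (L + D)) * (v 0 - (L + D)) + (u 1 - D) * (v 1 - D)) * ((u 0 - s 0) * (v 1 - s 1) - (u 1 - s 1) * (v 0 - s 0)) < ((u 0 - s 0) * (v 0 - s 0) + (u 1 - s 1) * (v 1 - s 1)) * ((u 0 - (L + D)) * (v 1 - D) - (u 1 - D) * (v 0 - (L + D))) := by
    by_contra hb
    push_neg at hb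
    exact absurd (corner_le u v s ((WithLp.equiv 2 (Fin 2 → ℝ)).symm ![L + D, D]) hAs hA3 hb)
      (not_le.2 hc3)
  have hb4 : ((u 0 - L) * (v 0 - L) + (u 1 - D) * (v 1 - D)) * ((u 0 - s 0) * (v 1 - s 1) - (u 1 - s 1) * (v 0 - s 0)) < ((u 0 - s 0) * (v 0 - s 0) + (u 1 - s 1) * (v 1 - s 1)) * ((u 0 - L) * (v 1 - D) - (u 1 - D) * (v 0 - L)) := by
    by_contra hb
    push_neg at hb
    exact absurd (corner_le u v s ((WithLp.equiv 2 (Fin 2 → ℝ)).symm ![L, D]) hAs hA4 hb)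
      (not_le.2 hc4)
  have hq : (0:ℝ) ≤ (s 0 - L) * (L + D - s 0) + s 1 * (D - s 1) :=
    add_nonneg (mul_nonneg (by linarith) (by linarith)) (mul_nonneg hs1 (by linarith))
  have hfq : (0:ℝ) ≤ D ^ 2 * (((s 0 - L) * (L + D - s 0) + s 1 * (D - s 1)) * ((u 0 - s 0) * (v 1 - s 1) - (u 1 - s 1) * (v 0 - s 0))) :=
    mul_nonneg (sq_nonneg D) (mul_nonneg hq hAs.le)
  have hcase : 0 < ((L + D - s 0) * (D - s 1)) ∨ 0 < ((s 0 - L) * (D - s 1)) ∨ 0 < ((s 0 - L) * s 1) ∨ 0 < ((L + D - s 0) * s 1) := by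
    by_contra hno
    push_neg at hno
    obtain ⟨n1, n2, n3, n4⟩ := hno
    have hsum : (L + D - s 0) * (D - s 1) + (s 0 - L) * (D - s 1) + (s 0 - L) * s 1
        + (L + D - s 0) * s 1 = D ^ 2 := by ring
    linarith [pow_pos hD 2]
  have hw1 : (0:ℝ) ≤ ((L + D - s 0) * (D - s 1)) := mul_nonneg (by linarith : (0:ℝ) ≤ L + D - s 0) (by linarith : (0:ℝ) ≤ D - s 1)
  have hw2 : (0:ℝ) ≤ ((s 0 - L) * (D - s 1)) := mul_nonneg (by linarith : (0:ℝ) ≤ s 0 - L) (by linarith : (0:ℝ) ≤ D - s 1)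
  have hw3 : (0:ℝ) ≤ ((s 0 - L) * s 1) := mul_nonneg (by linarith : (0:ℝ) ≤ s 0 - L) hs1
  have hw4 : (0:ℝ) ≤ ((L + D - s 0) * s 1) := mul_nonneg (by linarith : (0:ℝ) ≤ L + D - s 0) hs1
  rcases hcase with hpos | hpos | hpos | hpos
  · linarith [mul_pos hpos (sub_pos.2 hb1), mul_nonneg hw2 (sub_pos.2 hb2).le, mul_nonneg hw3 (sub_pos.2 hb3).le, mul_nonneg hw4 (sub_pos.2 hb4).le, hfq]
  · linarith [mul_nonneg hw1 (sub_pos.2 hb1).le, mul_pos hpos (sub_pos.2 hb2), mul_nonneg hw3 (sub_pos.2 hb3).le, mul_nonneg hw4 (sub_pos.2 hb4).le, hfq]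
  · linarith [mul_nonneg hw1 (sub_pos.2 hb1).le, mul_nonneg hw2 (sub_pos.2 hb2).le, mul_pos hpos (sub_pos.2 hb3), mul_nonneg hw4 (sub_pos.2 hb4).le, hfq]
  · linarith [mul_nonneg hw1 (sub_pos.2 hb1).le, mul_nonneg hw2 (sub_pos.2 hb2).le, mul_nonneg hw3 (sub_pos.2 hb3).le, mul_pos hpos (sub_pos.2 hb4), hfq]

/-- If `u ≠ v` lie in the square `C_T = [0,D] × [0,D]`, the line through `u` and `v`
does not intersect the square `C_R = [L, L+D] × [0,D]` (where `L ≥ 2D > 0`), then for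
every `s ∈ C_R` the angle `∠ u s v` is at least the minimum of the angles subtended
at the four corners of `C_R`. -/
theorem angle_ge_min_corner_angle
    (D L : ℝ) (hD : 0 < D) (hL : 2 * D ≤ L)
    (CT CR : Set (EuclideanSpace ℝ (Fin 2)))
    (hCT : CT = {p | p 0 ∈ Set.Icc 0 D ∧ p 1 ∈ Set.Icc 0 D})
    (hCR : CR = {p | p 0 ∈ Set.Icc L (L + D) ∧ p 1 ∈ Set.Icc 0 D})
    (u v : EuclideanSpace ℝ (Fin 2)) (hu : u ∈ CT) (hv : v ∈ CT) (huv : u ≠ v)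
    (hline : ∀ p ∈ affineSpan ℝ ({u, v} : Set (EuclideanSpace ℝ (Fin 2))), p ∉ CR)
    (s : EuclideanSpace ℝ (Fin 2)) (hs : s ∈ CR) :
    min (min (∠ u ((WithLp.equiv 2 (Fin 2 → ℝ)).symm ![L, 0]) v)
             (∠ u ((WithLp.equiv 2 (Fin 2 → ℝ)).symm ![L + D, 0]) v))
        (min (∠ u ((WithLp.equiv 2 (Fin 2 → ℝ)).symm ![L + D, D]) v)
             (∠ u ((WithLp.equiv 2 (Fin 2 → ℝ)).symm ![L, D]) v))
      ≤ ∠ u s v := by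
  subst hCT hCR
  obtain ⟨hsx, hsy⟩ := hs
  obtain ⟨hs0, hs0'⟩ := Set.mem_Icc.1 hsx
  obtain ⟨hs1, hs1'⟩ := Set.mem_Icc.1 hsy
  have hline' : ∀ p ∈ affineSpan ℝ ({u, v} : Set (EuclideanSpace ℝ (Fin 2))),
      ¬(p 0 ∈ Set.Icc L (L + D) ∧ p 1 ∈ Set.Icc 0 D) := fun p hp => hline p hp
  rcases lt_trichotomy ((u 0 - s 0) * (v 1 - s 1) - (u 1 - s 1) * (v 0 - s 0)) 0
    with hneg | hzero | hpos
  · -- swap u and v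
    have hpos' : 0 < (v 0 - s 0) * (u 1 - s 1) - (v 1 - s 1) * (u 0 - s 0) := by nlinarith
    have hlinevu : ∀ p ∈ affineSpan ℝ ({v, u} : Set (EuclideanSpace ℝ (Fin 2))),
        ¬(p 0 ∈ Set.Icc L (L + D) ∧ p 1 ∈ Set.Icc 0 D) := by
      rw [Set.pair_comm v u]; exact hline'
    have hkey := key D L hD v u huv.symm hlinevu s hs0 hs0' hs1 hs1' hpos'
    simp only [show ∀ x : EuclideanSpace ℝ (Fin 2), ∠ v x u = ∠ u x v from
      fun x => EuclideanGeometry.angle_comm v x u] at hkey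
    exact hkey
  · exact absurd (⟨hsx, hsy⟩ : _ ∧ _) (hline' s (mem_line u v s huv hzero))
  · exact key D L hD u v huv hline' s hs0 hs0' hs1 hs1' hpos
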